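/- Consider a set N of agents, a finite set A of alternatives with |A| ≥ 2, and a profile of strict preference orders (≻_i)_{i∈N} over A. There exists a single lottery over A that is efficient for every possible vector of quantile parameters h ∈ [0,1]^N if and only if all agents rank the same alternative first. -/

import Mathlib

open scoped Classical
open Finset

/-- Total probability mass of options strictly worse than `o` under strict preference `p`
(`p u v` means `u` is strictly preferred to `v`). -/
noncomputable def sWorse {O : Type*} [Fintype O] (x : O → ℝ) (p : O → O → Prop) (o : O) : ℝ :=
  ∑ o' ∈ univ.filter (fun o' => p o o'), x o'

/-- Total probability mass of options weakly worse than `o`. -/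
noncomputable def wWorse {O : Type*} [Fintype O] (x : O → ℝ) (p : O → O → Prop) (o : O) : ℝ :=
  ∑ o' ∈ univ.filter (fun o' => p o o' ∨ o' = o), x o'

/-- `x` is a lottery (probability distribution) over the finite set of options. -/
def IsLottery {O : Type*} [Fintype O] (x : O → ℝ) : Prop :=
  (∀ o, 0 ≤ x o) ∧ ∑ o, x o = 1

/-- `o` is the `h`-quantile representative of lottery `x` with respect to strict preference `p`:
for `h = 1` it is the most preferred option with positive probability; for `h < 1` it is the
option whose strictly-worse mass is at most `h` while its weakly-worse mass exceeds `h`. -/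
def IsRep {O : Type*} [Fintype O] (x : O → ℝ) (p : O → O → Prop) (h : ℝ) (o : O) : Prop :=
  (h = 1 ∧ 0 < x o ∧ ∀ o', p o' o → x o' = 0) ∨
  (h < 1 ∧ sWorse x p o ≤ h ∧ h < wWorse x p o)

/-- A lottery `y` dominates `x` for the profile `pref` and quantile vector `h`. -/
def Dominates {N O : Type*} [Fintype O] (pref : N → O → O → Prop) (h : N → ℝ)
    (y x : O → ℝ) : Prop :=
  (∀ i u v, IsRep y (pref i) (h i) u → IsRep x (pref i) (h i) v → (pref i u v ∨ u = v)) ∧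
  (∃ i u v, IsRep y (pref i) (h i) u ∧ IsRep x (pref i) (h i) v ∧ pref i u v)

/- ------------- auxiliary lemmas ------------- -/

lemma exists_min' {O : Type*} [Fintype O] (p : O → O → Prop) (hp : IsStrictTotalOrder O p)
    (s : Set O) (hs : s.Nonempty) : ∃ m ∈ s, ∀ b ∈ s, ¬ p m b := by
  haveI : IsTrans O (fun u v => p v u) := ⟨fun a b c h1 h2 => hp.trans _ _ _ h2 h1⟩
  haveI : IsIrrefl O (fun u v => p v u) := ⟨fun a h => hp.irrefl a h⟩
  have wf : WellFounded (fun u v : O => p v u) := Finite.wellFounded_of_trans_of_irrefl _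
  obtain ⟨m, hm, hmin⟩ := wf.has_min s hs
  exact ⟨m, hm, fun b hb hpb => hmin b hb hpb⟩

lemma sWorse_nonneg' {O : Type*} [Fintype O] {x : O → ℝ} (hx : ∀ o, 0 ≤ x o)
    (p : O → O → Prop) (o : O) : 0 ≤ sWorse x p o :=
  Finset.sum_nonneg fun _ _ => hx _

lemma self_le_wWorse {O : Type*} [Fintype O] {x : O → ℝ} (hx : ∀ o, 0 ≤ x o)
    (p : O → O → Prop) (o : O) : x o ≤ wWorse x p o := by
  apply Finset.single_le_sum (fun o' _ => hx o')
  simp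

lemma sWorse_zero_forall {O : Type*} [Fintype O] {x : O → ℝ} (hx : ∀ o, 0 ≤ x o)
    {p : O → O → Prop} {o : O} (h : sWorse x p o ≤ 0) : ∀ b, p o b → x b = 0 := by
  intro b hb
  have h0 : sWorse x p o = 0 := le_antisymm h (sWorse_nonneg' hx p o)
  rw [sWorse, Finset.sum_eq_zero_iff_of_nonneg (fun o' _ => hx o')] at h0
  exact h0 b (by simp [hb])

/-- A minimally-placed positive-mass option is the `0`-quantile representative. -/
lemma isRep_zero {O : Type*} [Fintype O] {x : O → ℝ} (hx : ∀ o, 0 ≤ x o)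
    (p : O → O → Prop) {m : O} (hm : 0 < x m) (hmin : ∀ b, p m b → x b = 0) :
    IsRep x p 0 m := by
  right
  refine ⟨zero_lt_one, le_of_eq ?_, lt_of_lt_of_le hm (self_le_wWorse hx p m)⟩
  exact Finset.sum_eq_zero fun o' ho' => hmin o' (by simpa using ho')

/-- There is a lottery that is efficient for every vector of quantile parameters
iff all agents rank the same alternative first. -/
theorem stmt1 {N A : Type*} [Fintype N] [Fintype A] (hA : 2 ≤ Fintype.card A)
    (pref : N → A → A → Prop) (hp : ∀ i, IsStrictTotalOrder A (pref i)) :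
    (∃ x : A → ℝ, IsLottery x ∧ ∀ h : N → ℝ, (∀ i, 0 ≤ h i ∧ h i ≤ 1) →
        ¬ ∃ y : A → ℝ, IsLottery y ∧ Dominates pref h y x) ↔
      (∃ a : A, ∀ i, ∀ b, b ≠ a → pref i a b) := by
  constructor
  · -- efficiency for all h → common top
    rintro ⟨x, hx, heff⟩
    by_cases hN : Nonempty N
    case neg =>
      have : Nonempty A := Fintype.card_pos_iff.mp (by omega)
      exact ⟨Classical.arbitrary A, fun i => (hN ⟨i⟩).elim⟩
    obtain ⟨i₀⟩ := hN
    have hx0 := hx.1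
    -- support is nonempty
    have hsupp_ne : ({o | x o ≠ 0} : Set A).Nonempty := by
      by_contra hc
      push_neg at hc
      have : ∑ o, x o = 0 := Finset.sum_eq_zero fun o _ => by
        by_contra h0; exact (Set.eq_empty_iff_forall_notMem.mp hc o) h0
      rw [hx.2] at this; norm_num at this
    -- step 1: the support is a subsingleton
    have hsub : ∀ t s : A, x t ≠ 0 → x s ≠ 0 → t = s := by
      by_contra hcon
      push_neg at hcon
      obtain ⟨t, s, ht, hs, hts⟩ := hcon
      obtain ⟨v, hv_mem, hv_min⟩ := exists_min' (pref i₀) (hp i₀) _ hsupp_ne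
      obtain ⟨t', ht'_mem, ht'_ne⟩ : ∃ t', x t' ≠ 0 ∧ t' ≠ v := by
        by_cases htv : t = v
        · exact ⟨s, hs, fun h => hts (htv.trans h.symm)⟩
        · exact ⟨t, ht, htv⟩
      have hptv : pref i₀ t' v := by
        rcases (by haveI := hp i₀; exact trichotomous_of (r := pref i₀) t' v) with h | h | h
        · exact h
        · exact absurd h ht'_ne
        · exact absurd h (hv_min t' ht'_mem)
      set y : A → ℝ := fun o => if o = t' then (1:ℝ) else 0 with hy_def
      have hy0 : ∀ o, 0 ≤ y o := by intro o; rw [hy_def]; dsimp only; split <;> norm_num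
      have hy : IsLottery y := by
        refine ⟨hy0, ?_⟩
        rw [hy_def]
        simp [Finset.sum_ite_eq']
      have hrep_y : ∀ j u, IsRep y (pref j) 0 u → u = t' := by
        intro j u hu
        rcases hu with ⟨h1, _⟩ | ⟨_, hsW, hwW⟩
        · norm_num at h1
        · have hW : wWorse y (pref j) u = if (pref j u t' ∨ t' = u) then 1 else 0 := by
            rw [wWorse, hy_def]
            simp only
            rw [Finset.sum_ite_eq']
            simp
          rw [hW] at hwW
          by_cases hc : pref j u t' ∨ t' = u
          · rcases hc with hc | hc
            · exact absurd (sWorse_zero_forall hy0 hsW t' hc) (by rw [hy_def]; simp)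
            · exact hc.symm
          · simp [hc] at hwW
      have hrep_x_min : ∀ j v', IsRep x (pref j) 0 v' → ∀ b, pref j v' b → x b = 0 := by
        intro j v' hv' b hb
        rcases hv' with ⟨h1, _⟩ | ⟨_, hsW, _⟩
        · norm_num at h1
        · exact sWorse_zero_forall hx0 hsW b hb
      refine heff (fun _ => 0) (fun i => ⟨le_refl _, zero_le_one⟩) ⟨y, hy, ?_, ?_⟩
      · intro j u v' hu hv'
        have hu' : u = t' := hrep_y j u hu
        rw [hu']
        have hnv : ¬ pref j v' t' := fun hc => ht'_mem (hrep_x_min j v' hv' t' hc)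
        rcases (by haveI := hp j; exact trichotomous_of (r := pref j) t' v') with h | h | h
        · exact Or.inl h
        · exact Or.inr h
        · exact absurd h hnv
      · refine ⟨i₀, t', v, ?_, ?_, hptv⟩
        · refine isRep_zero hy0 (pref i₀) (by rw [hy_def]; simp) ?_
          intro b hb
          rw [hy_def]
          simp only
          rw [if_neg]
          intro hbt; rw [hbt] at hb; exact (hp i₀).irrefl t' hb
        · refine isRep_zero hx0 (pref i₀) (lt_of_le_of_ne (hx0 v) (Ne.symm hv_mem)) ?_
          intro b hb
          by_contra hb0
          exact hv_min b hb0 hb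
    -- so x = δ_a for some a
    obtain ⟨a, ha⟩ := hsupp_ne
    have hxa : ∀ b, b ≠ a → x b = 0 := fun b hb => by
      by_contra h0; exact hb (hsub b a h0 ha)
    have hxa1 : x a = 1 := by
      rw [← hx.2]
      exact (Finset.sum_eq_single a (fun b _ hb => hxa b hb) (by simp)).symm
    -- step 2: a is everyone's top
    refine ⟨a, fun i b hb => ?_⟩
    by_contra hnab
    have hba : pref i b a := by
      rcases (by haveI := hp i; exact trichotomous_of (r := pref i) a b) with h | h | h
      · exact absurd h hnab
      · exact absurd h.symm hb
      · exact h
    set y : A → ℝ := fun o => (if o = a then (1:ℝ)/2 else 0) + (if o = b then 1/2 else 0)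
      with hy_def
    have hy0 : ∀ o, 0 ≤ y o := by
      intro o; rw [hy_def]; dsimp only
      apply add_nonneg <;> (split <;> norm_num)
    have hyb : y b = 1/2 := by rw [hy_def]; simp [hb]
    have hya : y a = 1/2 := by rw [hy_def]; simp [Ne.symm hb]
    have hy_supp : ∀ o, y o ≠ 0 → o = a ∨ o = b := by
      intro o ho
      by_contra hc
      push_neg at hc
      rw [hy_def] at ho
      simp [hc.1, hc.2] at ho
    have hy : IsLottery y := by
      refine ⟨hy0, ?_⟩
      rw [hy_def]
      rw [Finset.sum_add_distrib]
      simp [Finset.sum_ite_eq']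
      norm_num
    have hrepxa1 : IsRep x (pref i) 1 a :=
      Or.inl ⟨rfl, by rw [hxa1]; norm_num, fun o' ho' => by
        by_contra h0
        have := hsub o' a h0 ha
        rw [this] at ho'
        exact (hp i).irrefl a ho'⟩
    refine heff (fun _ => 1) (fun i => ⟨zero_le_one, le_refl _⟩) ⟨y, hy, ?_, ?_⟩
    · intro j u v' hu hv'
      have hv'a : v' = a := by
        rcases hv' with ⟨_, hpos, _⟩ | ⟨h1, _⟩
        · by_contra hc
          rw [hxa v' hc] at hpos; norm_num at hpos
        · norm_num at h1
      rw [hv'a]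
      rcases hu with ⟨_, hpos, htopy⟩ | ⟨h1, _⟩
      · rcases hy_supp u (ne_of_gt hpos) with h | h
        · exact Or.inr h
        · have hnab' : ¬ pref j a u := fun hc => by
            have h2 := htopy a hc; rw [hya] at h2; norm_num at h2
          rcases (by haveI := hp j; exact trichotomous_of (r := pref j) u a) with h2 | h2 | h2
          · exact Or.inl h2
          · exact Or.inr h2
          · exact absurd h2 hnab'
      · norm_num at h1
    · refine ⟨i, b, a, ?_, hrepxa1, hba⟩
      refine Or.inl ⟨rfl, by rw [hyb]; norm_num, ?_⟩
      intro o' ho'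
      by_contra h0
      rcases hy_supp o' h0 with h | h
      · subst h
        exact (hp i).irrefl b ((hp i).trans b o' b hba ho')
      · subst h
        exact (hp i).irrefl o' ho'
  · -- common top → δ_a is efficient for all h
    rintro ⟨a, htop⟩
    refine ⟨fun o => if o = a then 1 else 0, ⟨fun o => by dsimp only; split <;> norm_num,
      by simp [Finset.sum_ite_eq']⟩, ?_⟩
    intro h hh ⟨y, hy, hd1, hd2⟩
    obtain ⟨i, u, v, hu, hv, huv⟩ := hd2
    have hva : v = a := by
      rcases hv with ⟨_, hpos, _⟩ | ⟨_, _, hwW⟩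
      · by_contra hc
        simp only [if_neg hc] at hpos; norm_num at hpos
      · have hWle : wWorse (fun o => if o = a then (1:ℝ) else 0) (pref i) v
            = if (pref i v a ∨ a = v) then 1 else 0 := by
          rw [wWorse, Finset.sum_ite_eq']
          simp
        rw [hWle] at hwW
        by_cases hc : pref i v a ∨ a = v
        · rcases hc with hc | hc
          · have hva : v ≠ a := fun h' => by rw [h'] at hc; exact (hp i).irrefl a hc
            exact absurd ((hp i).trans a v a (htop i v hva) hc) ((hp i).irrefl a)
          · exact hc.symm
        · rw [if_neg hc] at hwW
          exact absurd (lt_of_le_of_lt (hh i).1 hwW) (lt_irrefl 0)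
    rw [hva] at huv
    by_cases hua : u = a
    · rw [hua] at huv; exact (hp i).irrefl a huv
    · exact (hp i).irrefl a ((hp i).trans a u a (htop i u hua) huv)
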